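/- Let A ∈ SO(3) (a 3×3 real orthogonal matrix of determinant 1) and let g ∈ SO(8) be the block-diagonal matrix g = diag(1, A, I₄). Then for all skew-symmetric 8×8 real matrices X, Y, Z: Te(g X gᵀ, g Y gᵀ, g Z gᵀ) = Te(X, Y, Z). (That is, the left-invariant form Te(ω) on SO(8) is invariant under the adjoint action of the isotropy subgroup 1×SO(3)×I₄, so it descends to a form on the flag manifold F(1,4,ℝ⁸).) -/

import Mathlib

open Matrix

/- STATEMENT 14: The Chern–Simons transgression 3-form
`Te = (1/(2π²))(μ₁₂∧μ₁₃∧μ₁₄ + ∑_{k=5}^{8}(μ₁₂∧μ₃k∧μ₄k − μ₁₃∧μ₂k∧μ₄k + μ₁₄∧μ₂k∧μ₃k))`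
on skew-symmetric 8×8 matrices is invariant under the adjoint action
`X ↦ g X gᵀ` of `g = diag(1, A, I₄)` with `A ∈ SO(3)`. (0-indexed.) -/

/-- Wedge of three 1-forms evaluated on three vectors (the 3×3 determinant). -/
noncomputable def w3 (f g h : Matrix (Fin 8) (Fin 8) ℝ → ℝ) (x y z : Matrix (Fin 8) (Fin 8) ℝ) : ℝ :=
  f x * g y * h z - f x * g z * h y - f y * g x * h z
    + f y * g z * h x + f z * g x * h y - f z * g y * h x

/-- Coordinate functional `μ_{ij}(X) = X_{ij}`. -/
def mu (i j : Fin 8) : Matrix (Fin 8) (Fin 8) ℝ → ℝ := fun X => X i j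

/-- column embedding `{5,…,8}` (0-indexed: `k ↦ k + 4`). -/
def col (k : Fin 4) : Fin 8 := ⟨k.1 + 4, by have := k.isLt; omega⟩

/-- The transgression 3-form `Te(ω)`, at the base point, in Maurer–Cartan coordinates. -/
noncomputable def Te (x y z : Matrix (Fin 8) (Fin 8) ℝ) : ℝ :=
  (1 / (2 * Real.pi ^ 2)) *
    (w3 (mu 0 1) (mu 0 2) (mu 0 3) x y z +
      ∑ k : Fin 4,
        (w3 (mu 0 1) (mu 2 (col k)) (mu 3 (col k)) x y z
          - w3 (mu 0 2) (mu 1 (col k)) (mu 3 (col k)) x y z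
          + w3 (mu 0 3) (mu 1 (col k)) (mu 2 (col k)) x y z))

/-- The block-diagonal matrix `g = diag(1, A, I₄)`. -/
noncomputable def gmat (A : Matrix (Fin 3) (Fin 3) ℝ) : Matrix (Fin 8) (Fin 8) ℝ :=
  Matrix.of fun i j =>
    if i.1 = 0 ∧ j.1 = 0 then 1
    else if h : 1 ≤ i.1 ∧ i.1 ≤ 3 ∧ 1 ≤ j.1 ∧ j.1 ≤ 3 then
      A ⟨i.1 - 1, by omega⟩ ⟨j.1 - 1, by omega⟩
    else if 4 ≤ i.1 ∧ i = j then 1 else 0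

-- aux
def uvec (X : Matrix (Fin 8) (Fin 8) ℝ) : Fin 3 → ℝ := fun m => X 0 (![1, 2, 3] m)
def vvec (k : Fin 4) (X : Matrix (Fin 8) (Fin 8) ℝ) : Fin 3 → ℝ := fun m => X (![1, 2, 3] m) (col k)
def D3 (p q r : Fin 3 → ℝ) : ℝ :=
  p 0 * (q 1 * r 2 - q 2 * r 1) - p 1 * (q 0 * r 2 - q 2 * r 0) + p 2 * (q 0 * r 1 - q 1 * r 0)

lemma Te_struct (x y z : Matrix (Fin 8) (Fin 8) ℝ) :
    Te x y z = (1 / (2 * Real.pi ^ 2)) *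
      (D3 (uvec x) (uvec y) (uvec z) +
        ∑ k : Fin 4, (D3 (uvec x) (vvec k y) (vvec k z)
          - D3 (uvec y) (vvec k x) (vvec k z) + D3 (uvec z) (vvec k x) (vvec k y))) := by
  simp only [Te, w3, mu, uvec, vvec, D3, Fin.sum_univ_four, Matrix.cons_val_zero,
    Matrix.cons_val_one, Matrix.head_cons, Matrix.cons_val_two, Matrix.tail_cons]
  ring

lemma D3_mulVec (A : Matrix (Fin 3) (Fin 3) ℝ) (p q r : Fin 3 → ℝ) :
    D3 (A.mulVec p) (A.mulVec q) (A.mulVec r) = A.det * D3 p q r := by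
  simp [D3, Matrix.mulVec, dotProduct, Fin.sum_univ_three, Matrix.det_fin_three]
  ring

lemma gmat_zero (A : Matrix (Fin 3) (Fin 3) ℝ) (b : Fin 8) :
    gmat A 0 b = if b = 0 then 1 else 0 := by
  rcases b with ⟨b, hb⟩
  simp only [gmat, Matrix.of_apply, Fin.ext_iff]
  interval_cases b <;> norm_num

lemma gmat_row (A : Matrix (Fin 3) (Fin 3) ℝ) (m : Fin 3) (b : Fin 8) :
    gmat A (![1, 2, 3] m) b =
      if h : 1 ≤ b.1 ∧ b.1 ≤ 3 then A m ⟨b.1 - 1, by omega⟩ else 0 := by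
  rcases b with ⟨b, hb⟩
  fin_cases m <;>
  · simp only [gmat, Matrix.of_apply, Fin.ext_iff]
    interval_cases b <;> norm_num <;> first | rfl | decide

lemma gmat_col (A : Matrix (Fin 3) (Fin 3) ℝ) (k : Fin 4) (b : Fin 8) :
    gmat A (col k) b = if col k = b then 1 else 0 := by
  have hk : (col k).1 = k.1 + 4 := rfl
  have h4 : 4 ≤ (col k).1 := by omega
  simp only [gmat, Matrix.of_apply]
  rw [if_neg (by omega), dif_neg (by omega), if_congr (iff_of_eq (by
    simp only [eq_iff_iff]; constructor
    · rintro ⟨-, h⟩; exact h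
    · intro h; exact ⟨h4, h⟩)) rfl rfl]

lemma u_trans (A : Matrix (Fin 3) (Fin 3) ℝ) (X : Matrix (Fin 8) (Fin 8) ℝ) :
    uvec (gmat A * X * (gmat A)ᵀ) = A.mulVec (uvec X) := by
  funext m
  show (gmat A * X * (gmat A)ᵀ) 0 (![1, 2, 3] m) = _
  simp only [Matrix.mul_apply, Matrix.transpose_apply, gmat_zero, gmat_row,
    Matrix.mulVec, dotProduct, uvec, Fin.sum_univ_succ, Fin.sum_univ_three,
    Finset.sum_const_zero, Fin.isValue, ite_mul, mul_ite, zero_mul, mul_zero,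
    one_mul, dite_mul]
  norm_num [Fin.ext_iff]
  simp only [show (Fin.succ 2 : Fin 8) = 3 from rfl,
    show ((⟨2, by omega⟩ : Fin 3)) = 2 from rfl,
    show (![1, 2, 3] : Fin 3 → Fin 8) 2 = 3 from rfl]
  try ring

lemma v_trans (A : Matrix (Fin 3) (Fin 3) ℝ) (k : Fin 4) (X : Matrix (Fin 8) (Fin 8) ℝ) :
    vvec k (gmat A * X * (gmat A)ᵀ) = A.mulVec (vvec k X) := by
  funext m
  show (gmat A * X * (gmat A)ᵀ) (![1, 2, 3] m) (col k) = _
  simp only [Matrix.mul_apply, Matrix.transpose_apply, gmat_col, gmat_row,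
    Matrix.mulVec, dotProduct, vvec, Fin.sum_univ_succ, Fin.sum_univ_three,
    Finset.sum_const_zero, Fin.isValue, ite_mul, mul_ite, zero_mul, mul_zero,
    mul_one, one_mul, dite_mul, Finset.sum_ite_eq, Finset.mem_univ, if_true]
  norm_num [Fin.ext_iff]
  simp only [show (Fin.succ 2 : Fin 8) = 3 from rfl,
    show ((⟨2, by omega⟩ : Fin 3)) = 2 from rfl,
    show (![1, 2, 3] : Fin 3 → Fin 8) 2 = 3 from rfl]
  try ring

theorem stmt_14 (A : Matrix (Fin 3) (Fin 3) ℝ) (hA : Aᵀ * A = 1) (hdet : A.det = 1)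
    (X Y Z : Matrix (Fin 8) (Fin 8) ℝ) (hX : Xᵀ = -X) (hY : Yᵀ = -Y) (hZ : Zᵀ = -Z) :
    Te (gmat A * X * (gmat A)ᵀ) (gmat A * Y * (gmat A)ᵀ) (gmat A * Z * (gmat A)ᵀ) =
      Te X Y Z := by
  simp only [Te_struct, u_trans, v_trans, D3_mulVec, hdet, one_mul]
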